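/- Let B, β, μ, d, α > 0, let E₁, E₂, E₃ ∈ (0,1] with S₀* = B/μ, and let S₁*, I₁* > 0 satisfy S₁* = (B + αE₃ I₁*)/(μ + βE₁G(I₁*)) and βE₁E₂ S₁* G(I₁*) = (μ+d+α)I₁*, where G satisfies G(0)=0, increasing, and G(x) ≤ x. If S₁* ≤ S₀*, then BβE₁G(I₁*) − μαE₃ I₁* ≥ μ(μ+d+α)(S₀* − S₁*)I₁*/(E₂ S₁*) > 0 whenever S₀* > S₁*; consequently S₁* < B/(μ + βI₁* q) for every q ∈ (0, q̄), where q̄ = (BβE₁G(I₁*) − μαE₃ I₁*)/((B + αE₃ I₁*)βI₁*). -/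

import Mathlib

theorem stmt15 (B β μ d α E₁ E₂ E₃ S₀ S₁ I₁ : ℝ) (G : ℝ → ℝ)
    (hB : 0 < B) (hβ : 0 < β) (hμ : 0 < μ) (hd : 0 < d) (hα : 0 < α)
    (hE₁ : E₁ ∈ Set.Ioc (0:ℝ) 1) (hE₂ : E₂ ∈ Set.Ioc (0:ℝ) 1)
    (hE₃ : E₃ ∈ Set.Ioc (0:ℝ) 1)
    (hS₀ : S₀ = B / μ) (hS₁ : 0 < S₁) (hI₁ : 0 < I₁)
    (hG0 : G 0 = 0) (hGmono : MonotoneOn G (Set.Ici 0))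
    (hGle : ∀ x ≥ (0:ℝ), G x ≤ x)
    (heq1 : S₁ = (B + α * E₃ * I₁) / (μ + β * E₁ * G I₁))
    (heq2 : β * E₁ * E₂ * S₁ * G I₁ = (μ + d + α) * I₁)
    (hle : S₁ ≤ S₀) :
    (S₁ < S₀ →
      μ * (μ + d + α) * (S₀ - S₁) * I₁ / (E₂ * S₁) ≤ B * β * E₁ * G I₁ - μ * α * E₃ * I₁ ∧
      0 < B * β * E₁ * G I₁ - μ * α * E₃ * I₁) ∧
    (∀ q : ℝ, 0 < q →
      q < (B * β * E₁ * G I₁ - μ * α * E₃ * I₁) / ((B + α * E₃ * I₁) * β * I₁) →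
      S₁ < B / (μ + β * I₁ * q)) := by
  obtain ⟨hE₁p, -⟩ := hE₁
  obtain ⟨hE₂p, -⟩ := hE₂
  obtain ⟨hE₃p, -⟩ := hE₃
  have hGnn : 0 ≤ G I₁ := by
    have h := hGmono (Set.mem_Ici.2 le_rfl) (Set.mem_Ici.2 hI₁.le) hI₁.le
    rw [hG0] at h; exact h
  have hden : 0 < μ + β * E₁ * G I₁ := by positivity
  have hclear : S₁ * (μ + β * E₁ * G I₁) = B + α * E₃ * I₁ := by
    rw [heq1]; field_simp
  have hkey : B * β * E₁ * G I₁ - μ * α * E₃ * I₁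
      = (B - μ * S₁) * (β * E₁ * G I₁ + μ) := by
    linear_combination μ * hclear
  constructor
  · intro hlt
    have hBS : 0 < B - μ * S₁ := by
      have : μ * S₁ < μ * S₀ := by nlinarith
      rw [hS₀] at this
      have : μ * S₁ < B := by
        rw [mul_div_cancel₀ _ hμ.ne'] at this; exact this
      linarith
    have hpos : 0 < B * β * E₁ * G I₁ - μ * α * E₃ * I₁ := by
      rw [hkey]; positivity
    refine ⟨?_, hpos⟩
    rw [div_le_iff₀ (by positivity : (0:ℝ) < E₂ * S₁), hkey]
    have hB' : μ * S₀ = B := by rw [hS₀]; field_simp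
    have h4 : (B - μ * S₁) * (β * E₁ * G I₁ + μ) * (E₂ * S₁)
        - μ * (μ + d + α) * (S₀ - S₁) * I₁
        = μ * μ * (S₀ - S₁) * (E₂ * S₁) := by
      linear_combination (-(β * E₁ * G I₁ + μ) * E₂ * S₁) * hB' + (μ * (S₀ - S₁)) * heq2
    nlinarith [mul_nonneg (mul_nonneg (mul_nonneg (mul_pos hμ hμ).le (sub_pos.2 hlt).le) hE₂p.le) hS₁.le]
  · intro q hq hq2
    have hdpos : 0 < (B + α * E₃ * I₁) * β * I₁ := by positivity
    rw [lt_div_iff₀ hdpos, hkey] at hq2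
    -- q * ((B + αE₃I₁) * β * I₁) < (B - μS₁)(βE₁G + μ)
    rw [← hclear] at hq2
    have h3 : q * β * I₁ * S₁ < B - μ * S₁ := by
      have := (mul_lt_mul_iff_of_pos_right hden).mp (by nlinarith : q * β * I₁ * S₁ * (μ + β * E₁ * G I₁) < (B - μ * S₁) * (μ + β * E₁ * G I₁))
      exact this
    rw [lt_div_iff₀ (by positivity : (0:ℝ) < μ + β * I₁ * q)]
    nlinarith
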